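/- For the lazy random walk on the d-dimensional hypercube {0,1}^d (loop probability 1/2, move to each of the d neighbors with probability 1/(2d)), the transition probability P_{i,j}(t) between any two fixed vertices i and j is a unimodal function of t. -/

import Mathlib

/-- Transition matrix of the lazy random walk on the `d`-dimensional hypercube:
loop probability `1/2`, and probability `1/(2d)` for each of the `d` neighbors. -/
noncomputable def cubeP (d : ℕ) : Matrix (Fin d → Bool) (Fin d → Bool) ℝ :=
  fun x y =>
    if x = y then 1 / 2
    else if hammingDist x y = 1 then 1 / (2 * d)
    else 0

/-- A function `f : ℕ → ℝ` is unimodal if there is an `s` such that `f` is monotone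
on `{t | t ≤ s}` and monotone on `{t | s ≤ t}`. -/
def Unimodal (f : ℕ → ℝ) : Prop :=
  ∃ s : ℕ, (MonotoneOn f {x | x ≤ s} ∨ AntitoneOn f {x | x ≤ s}) ∧
    (MonotoneOn f {x | s ≤ x} ∨ AntitoneOn f {x | s ≤ x})


/-- Stirling numbers of the second kind. -/
def Stir : ℕ → ℕ → ℕ
  | 0, 0 => 1
  | 0, _+1 => 0
  | _+1, 0 => 0
  | t+1, n+1 => (n+1) * Stir t (n+1) + Stir t n

lemma Stir_zero_succ (n : ℕ) : Stir 0 (n+1) = 0 := rfl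
lemma Stir_succ_zero (t : ℕ) : Stir (t+1) 0 = 0 := rfl
lemma Stir_succ_succ (t n : ℕ) : Stir (t+1) (n+1) = (n+1) * Stir t (n+1) + Stir t n := rfl

lemma Stir_eq_zero_of_lt : ∀ {t n : ℕ}, t < n → Stir t n = 0 := by
  intro t
  induction t with
  | zero => intro n h; cases n with
    | zero => omega
    | succ m => rfl
  | succ t ih =>
    intro n h
    cases n with
    | zero => omega
    | succ m =>
      rw [Stir_succ_succ, ih (by omega), ih (by omega)]; ring

lemma Stir_pos : ∀ {t n : ℕ}, 1 ≤ n → n ≤ t → 0 < Stir t n := by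
  intro t
  induction t with
  | zero => intro n h1 h2; omega
  | succ t ih =>
    intro n h1 h2
    cases n with
    | zero => omega
    | succ m =>
      rw [Stir_succ_succ]
      rcases Nat.lt_or_ge t (m+1) with h | h
      · -- m+1 = t+1, so m = t
        have hm : m = t := by omega
        subst hm
        cases m with
        | zero => simp [Stir]
        | succ a => have := ih (n := a+1) (by omega) (by omega); positivity
      · have := ih (n := m+1) (by omega) h; positivity

lemma Stir_succ_eq_zero {t n : ℕ} (h : Stir t (n+1) = 0) : Stir t (n+2) = 0 := by
  apply Stir_eq_zero_of_lt
  by_contra hc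
  push_neg at hc
  exact absurd h (Stir_pos (n := n+1) (by omega) (by omega)).ne'

/-- Log-concavity of Stirling numbers of the second kind in the lower index. -/
lemma Stir_logConcave : ∀ (t n : ℕ),
    Stir t n * Stir t (n+2) ≤ Stir t (n+1) * Stir t (n+1) := by
  intro t
  induction t with
  | zero => intro n; rw [Stir_zero_succ]; simp
  | succ t ih =>
    intro n
    cases n with
    | zero => rw [Stir_succ_zero]; simp
    | succ m =>
      -- abbreviations
      set A := Stir t (m+2) with hA
      set B := Stir t (m+1) with hB
      set C := Stir t (m+3) with hC
      set D := Stir t m with hD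
      have h1 : B * C ≤ A * A := ih (m+1)
      have h2 : D * A ≤ B * B := ih m
      have h3 : D * C ≤ A * B := by
        rcases Nat.eq_zero_or_pos (A * B) with h | h
        · rcases Nat.mul_eq_zero.mp h with h | h
          · have : C = 0 := by rw [hC]; exact Stir_succ_eq_zero h
            simp [this]
          · have : A = 0 := by
              rw [hA]; exact Stir_succ_eq_zero h
            have : C = 0 := by rw [hC]; exact Stir_succ_eq_zero (hA ▸ this)
            simp [this]
        · have key : (D * C) * (A * B) ≤ (A * B) * (A * B) := by
            calc (D * C) * (A * B) = (D * A) * (B * C) := by ring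
            _ ≤ (B * B) * (A * A) := Nat.mul_le_mul h2 h1
            _ = (A * B) * (A * B) := by ring
          exact Nat.le_of_mul_le_mul_right (by linarith [key]) h
      show Stir (t+1) (m+1) * Stir (t+1) (m+3) ≤ Stir (t+1) (m+2) * Stir (t+1) (m+2)
      rw [Stir_succ_succ t m, Stir_succ_succ t (m+2), Stir_succ_succ t (m+1)]
      show ((m+1) * B + D) * ((m+3) * C + A) ≤ ((m+2) * A + B) * ((m+2) * A + B)
      calc ((m+1) * B + D) * ((m+3) * C + A)
          = (m+1)*(m+3)*(B*C) + ((m+1)*(A*B) + ((m+3)*(D*C) + D*A)) := by ring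
        _ ≤ (m+1)*(m+3)*(A*A) + ((m+1)*(A*B) + ((m+3)*(A*B) + B*B)) := by
            gcongr
        _ ≤ ((m+2) * A + B) * ((m+2) * A + B) := by nlinarith [Nat.zero_le (A*A)]

/-- Generalized log-concavity. -/
lemma Stir_GLC (t a : ℕ) : ∀ j : ℕ,
    Stir t a * Stir t (a+2+j) ≤ Stir t (a+1) * Stir t (a+1+j) := by
  intro j
  induction j with
  | zero => simpa using Stir_logConcave t a
  | succ j ih =>
    rcases Nat.eq_zero_or_pos (Stir t (a+1+j)) with h | h
    · have ht : t < a+1+j := by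
        by_contra hc
        push_neg at hc
        exact absurd h (Stir_pos (by omega) hc).ne'
      have h2 : Stir t (a+1+(j+1)) = 0 := Stir_eq_zero_of_lt (by omega)
      have h3 : Stir t (a+2+(j+1)) = 0 := Stir_eq_zero_of_lt (by omega)
      rw [h2, h3]
      simp
    · rw [show a+1+(j+1) = a+2+j from by omega, show a+2+(j+1) = a+3+j from by omega]
      have lc : Stir t (a+1+j) * Stir t (a+3+j) ≤ Stir t (a+2+j) * Stir t (a+2+j) := by
        have h0 := Stir_logConcave t (a+1+j)
        rw [show a+1+j+2 = a+3+j from by omega, show a+1+j+1 = a+2+j from by omega] at h0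
        exact h0
      have key : (Stir t a * Stir t (a+3+j)) * Stir t (a+1+j)
          ≤ (Stir t (a+1) * Stir t (a+2+j)) * Stir t (a+1+j) := by
        calc (Stir t a * Stir t (a+3+j)) * Stir t (a+1+j)
            = Stir t a * (Stir t (a+1+j) * Stir t (a+3+j)) := by ring
          _ ≤ Stir t a * (Stir t (a+2+j) * Stir t (a+2+j)) :=
              Nat.mul_le_mul_left _ lc
          _ = (Stir t a * Stir t (a+2+j)) * Stir t (a+2+j) := by ring
          _ ≤ (Stir t (a+1) * Stir t (a+1+j)) * Stir t (a+2+j) :=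
              Nat.mul_le_mul_right _ ih
          _ = (Stir t (a+1) * Stir t (a+2+j)) * Stir t (a+1+j) := by ring
      exact Nat.le_of_mul_le_mul_right key h

/-- TP2 property of Stirling numbers in (time, index). -/
lemma Stir_TP2 (t : ℕ) : ∀ n j : ℕ,
    Stir t (n+j) * Stir (t+1) n ≤ Stir t n * Stir (t+1) (n+j) := by
  intro n j
  cases n with
  | zero => rw [Stir_succ_zero]; simp
  | succ a =>
    -- n = a+1, n+j = a+1+j
    have hrec1 : Stir (t+1) (a+1) = (a+1) * Stir t (a+1) + Stir t a := Stir_succ_succ t a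
    have hrec2 : Stir (t+1) (a+1+j) = (a+1+j) * Stir t (a+1+j) + Stir t (a+j) := by
      rw [show a+1+j = (a+j)+1 from by omega]
      exact Stir_succ_succ t (a+j)
    rw [hrec1, hrec2]
    have hglc : Stir t a * Stir t (a+1+j) ≤ Stir t (a+1) * Stir t (a+j) := by
      cases j with
      | zero => simp [Nat.mul_comm]
      | succ j' =>
        rw [show a+1+(j'+1) = a+2+j' from by omega, show a+(j'+1) = a+1+j' from by omega]
        exact Stir_GLC t a j'
    nlinarith [hglc, Nat.zero_le (j * (Stir t (a+1) * Stir t (a+1+j)))]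

/-- The key binomial identity in ℕ. -/
lemma natIdent (k j r : ℕ) :
    2*(k+j)*(r.choose j) + (k+j+1)*(r.choose (j+1))
      = (k+r)*(r.choose j) + k*((r+1).choose (j+1)) + j*(r.choose j) := by
  rcases le_or_gt j r with h | h
  · obtain ⟨m, rfl⟩ : ∃ m, r = j + m := ⟨r - j, by omega⟩
    have h1 := Nat.choose_succ_right_eq (j+m) j
    have h2 := Nat.choose_succ_succ (j+m) j
    rw [h2]
    have h3 : j + m - j = m := by omega
    rw [h3] at h1
    nlinarith [h1]
  · have c1 : r.choose j = 0 := Nat.choose_eq_zero_of_lt h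
    have c2 : r.choose (j+1) = 0 := Nat.choose_eq_zero_of_lt (by omega)
    have c3 : (r+1).choose (j+1) = 0 := Nat.choose_eq_zero_of_lt (by omega)
    simp [c1, c2, c3]

/-- Coefficients of the Stirling expansion of hypercube transition probabilities. -/
noncomputable def Acoef (d k n : ℕ) : ℝ :=
  if k ≤ n then (n.factorial : ℝ) * ((d-k).choose (n-k) : ℝ) * (1/2)^n else 0

lemma Acoef_nonneg (d k n : ℕ) : 0 ≤ Acoef d k n := by
  unfold Acoef; split
  · positivity
  · exact le_refl 0

lemma Acoef_eq_zero (d k n : ℕ) (hk : k ≤ d) (hn : d < n) : Acoef d k n = 0 := by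
  unfold Acoef; split
  · rw [Nat.choose_eq_zero_of_lt (by omega)]; ring
  · rfl

lemma Acoef_rec (d k : ℕ) (hk : k ≤ d) (n : ℕ) (hn : n ≤ d) :
    2 * ((n:ℝ) * Acoef d k n + Acoef d k (n+1))
      = (d:ℝ) * Acoef d k n + (k:ℝ) * Acoef d (k-1) n
        + ((d-k:ℕ):ℝ) * Acoef d (k+1) n := by
  rcases lt_or_ge n k with hnk | hnk
  · -- n < k
    have hA : Acoef d k n = 0 := by unfold Acoef; rw [if_neg (by omega)]
    have hA2 : Acoef d (k+1) n = 0 := by unfold Acoef; rw [if_neg (by omega)]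
    rcases Nat.eq_or_lt_of_le hnk with he | hlt
    · -- n + 1 = k
      obtain rfl : k = n + 1 := by omega
      have h1 : Acoef d (n+1) (n+1)
          = ((n+1).factorial : ℝ) * (1/2)^(n+1) := by
        unfold Acoef; rw [if_pos (le_refl _)]
        simp
      have h2 : Acoef d (n+1-1) n = (n.factorial : ℝ) * (1/2)^n := by
        unfold Acoef
        rw [if_pos (by omega)]
        have : n - (n+1-1) = 0 := by omega
        rw [this, Nat.choose_zero_right]
        simp
      rw [hA, hA2, h1, h2]
      rw [Nat.factorial_succ]
      push_cast
      ring
    · -- n + 1 < k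
      have h1 : Acoef d k (n+1) = 0 := by unfold Acoef; rw [if_neg (by omega)]
      have h2 : Acoef d (k-1) n = 0 := by unfold Acoef; rw [if_neg (by omega)]
      rw [hA, hA2, h1, h2]; ring
  · -- k ≤ n
    obtain ⟨j, rfl⟩ : ∃ j, n = k + j := ⟨n - k, by omega⟩
    obtain ⟨r, rfl⟩ : ∃ r, d = k + r := ⟨d - k, by omega⟩
    have hjr : j ≤ r := by omega
    have e1 : Acoef (k+r) k (k+j)
        = ((k+j).factorial : ℝ) * (r.choose j : ℝ) * (1/2)^(k+j) := by
      unfold Acoef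
      rw [if_pos (by omega), show k+r-k = r from by omega, show k+j-k = j from by omega]
    have e2 : Acoef (k+r) k (k+j+1)
        = ((k+j+1).factorial : ℝ) * (r.choose (j+1) : ℝ) * (1/2)^(k+j+1) := by
      unfold Acoef
      rw [if_pos (by omega), show k+r-k = r from by omega,
        show k+j+1-k = j+1 from by omega]
    have e3 : (r:ℝ) * Acoef (k+r) (k+1) (k+j)
        = (j:ℝ) * (((k+j).factorial : ℝ) * (r.choose j : ℝ) * (1/2)^(k+j)) := by
      rcases Nat.eq_zero_or_pos j with rfl | hj
      · have h0 : Acoef (k+r) (k+1) (k+0) = 0 := by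
          unfold Acoef; rw [if_neg (by omega)]
        rw [h0]; simp
      · have hr : 1 ≤ r := le_trans hj hjr
        have hval : Acoef (k+r) (k+1) (k+j)
            = ((k+j).factorial : ℝ) * ((r-1).choose (j-1) : ℝ) * (1/2)^(k+j) := by
          unfold Acoef
          rw [if_pos (by omega), show k+r-(k+1) = r-1 from by omega,
            show k+j-(k+1) = j-1 from by omega]
        rw [hval]
        have hnat : r * (r-1).choose (j-1) = j * r.choose j := by
          obtain ⟨r', rfl⟩ : ∃ r', r = r'+1 := ⟨r-1, by omega⟩
          obtain ⟨j', rfl⟩ : ∃ j', j = j'+1 := ⟨j-1, by omega⟩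
          simp only [Nat.add_sub_cancel]
          have := Nat.add_one_mul_choose_eq r' j'
          try rw [Nat.succ_eq_add_one] at this
          linarith [this]
        have hcast : (r:ℝ) * ((r-1).choose (j-1) : ℝ) = (j:ℝ) * (r.choose j : ℝ) := by
          exact_mod_cast hnat
        linear_combination (((k+j).factorial : ℝ) * (1/2)^(k+j)) * hcast
    have nidR : (2*(k+j)*(r.choose j) + (k+j+1)*(r.choose (j+1)) : ℝ)
        = ((k+r)*(r.choose j) + k*((r+1).choose (j+1)) + j*(r.choose j) : ℝ) := by
      exact_mod_cast natIdent k j r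
    rw [e1, e2, show k+r-k = r from by omega, e3]
    rcases Nat.eq_zero_or_pos k with rfl | hkpos
    · simp only [Nat.cast_zero, zero_mul, add_zero, zero_add] at nidR ⊢
      rw [Nat.factorial_succ]
      push_cast
      linear_combination (((j).factorial : ℝ) * (1/2)^(j)) * nidR
    · have e4 : Acoef (k+r) (k-1) (k+j)
          = ((k+j).factorial : ℝ) * ((r+1).choose (j+1) : ℝ) * (1/2)^(k+j) := by
        unfold Acoef
        rw [if_pos (by omega), show k+r-(k-1) = r+1 from by omega,
          show k+j-(k-1) = j+1 from by omega]
      rw [e4, Nat.factorial_succ]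
      push_cast
      linear_combination (((k+j).factorial : ℝ) * (1/2)^(k+j)) * nidR

open Finset in
/-- The Stirling-expansion sum. -/
noncomputable def Gfun (d k t : ℕ) : ℝ :=
  ∑ n ∈ Finset.range (d+1), (Stir t n : ℝ) * Acoef d k n

open Finset in
lemma Gfun_succ (d k : ℕ) (hk : k ≤ d) (t : ℕ) :
    Gfun d k (t+1)
      = ∑ n ∈ Finset.range (d+1),
          (Stir t n : ℝ) * ((n:ℝ) * Acoef d k n + Acoef d k (n+1)) := by
  unfold Gfun
  rw [Finset.sum_range_succ']
  rw [Stir_succ_zero]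
  push_cast
  rw [zero_mul, add_zero]
  have step : ∀ m, ((Stir (t+1) (m+1) : ℝ)) * Acoef d k (m+1)
      = ((m+1:ℕ):ℝ) * (Stir t (m+1) : ℝ) * Acoef d k (m+1)
        + (Stir t m : ℝ) * Acoef d k (m+1) := by
    intro m
    rw [Stir_succ_succ]
    push_cast
    ring
  rw [Finset.sum_congr rfl (fun m _ => step m)]
  rw [Finset.sum_add_distrib]
  -- RHS of the goal
  conv_rhs =>
    rw [Finset.sum_congr rfl (fun n _ => (mul_add (Stir t n : ℝ) _ _ : _ = _))]
  rw [Finset.sum_add_distrib]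
  congr 1
  · -- ∑_{m<d} (m+1) * Stir t (m+1) * A (m+1) = ∑_{n<d+1} Stir t n * (n * A n)
    rw [Finset.sum_range_succ']
    simp only [Nat.cast_zero, zero_mul, mul_zero, add_zero]
    apply Finset.sum_congr rfl
    intro m _
    push_cast
    ring
  · -- ∑_{m<d} Stir t m * A (m+1) = ∑_{n<d+1} Stir t n * A (n+1)
    rw [Finset.sum_range_succ]
    rw [Acoef_eq_zero d k (d+1) hk (by omega)]
    rw [mul_zero, add_zero]

lemma Gfun_rec (d k : ℕ) (hk : k ≤ d) (t : ℕ) :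
    2 * Gfun d k (t+1)
      = (d:ℝ) * Gfun d k t + (k:ℝ) * Gfun d (k-1) t
        + ((d-k:ℕ):ℝ) * Gfun d (k+1) t := by
  rw [Gfun_succ d k hk t]
  unfold Gfun
  rw [Finset.mul_sum, Finset.mul_sum, Finset.mul_sum, Finset.mul_sum]
  rw [← Finset.sum_add_distrib, ← Finset.sum_add_distrib]
  apply Finset.sum_congr rfl
  intro n hn
  have hn' : n ≤ d := by
    have := Finset.mem_range.mp hn; omega
  have := Acoef_rec d k hk n hn'
  calc 2 * ((Stir t n : ℝ) * ((n:ℝ) * Acoef d k n + Acoef d k (n+1)))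
      = (Stir t n : ℝ) * (2 * ((n:ℝ) * Acoef d k n + Acoef d k (n+1))) := by ring
    _ = (Stir t n : ℝ) * ((d:ℝ) * Acoef d k n + (k:ℝ) * Acoef d (k-1) n
          + ((d-k:ℕ):ℝ) * Acoef d (k+1) n) := by rw [this]
    _ = _ := by ring

section Cube
variable {d : ℕ}

/-- Flip coordinate `ℓ`. -/
def cflip (i : Fin d → Bool) (ℓ : Fin d) : Fin d → Bool :=
  Function.update i ℓ (!(i ℓ))

lemma cflip_apply_self (i : Fin d → Bool) (ℓ : Fin d) : cflip i ℓ ℓ = !(i ℓ) := by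
  simp [cflip]

lemma cflip_apply_ne (i : Fin d → Bool) {ℓ c : Fin d} (h : c ≠ ℓ) : cflip i ℓ c = i c := by
  simp [cflip, Function.update_of_ne h]

lemma cflip_ne (i : Fin d → Bool) (ℓ : Fin d) : cflip i ℓ ≠ i := by
  intro h
  have := congrFun h ℓ
  rw [cflip_apply_self] at this
  simp at this

lemma cflip_inj (i : Fin d → Bool) : Function.Injective (cflip i) := by
  intro ℓ ℓ' h
  by_contra hne
  have h1 := congrFun h ℓ
  rw [cflip_apply_self] at h1
  rw [cflip_apply_ne i hne] at h1
  simp at h1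

lemma hammingDist_cflip_one (i : Fin d → Bool) (ℓ : Fin d) :
    hammingDist i (cflip i ℓ) = 1 := by
  unfold hammingDist
  have : ({c | i c ≠ cflip i ℓ c} : Finset (Fin d)) = {ℓ} := by
    ext c
    simp only [Finset.mem_filter, Finset.mem_univ, true_and, Finset.mem_singleton]
    constructor
    · intro h
      by_contra hc
      exact h (cflip_apply_ne i hc).symm
    · intro h; subst h
      rw [cflip_apply_self]
      simp
  rw [this, Finset.card_singleton]

lemma exists_cflip_of_dist_one {i x : Fin d → Bool} (h : hammingDist i x = 1) :
    ∃ ℓ, x = cflip i ℓ := by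
  unfold hammingDist at h
  obtain ⟨ℓ, hℓ⟩ := Finset.card_eq_one.mp h
  refine ⟨ℓ, funext fun c => ?_⟩
  by_cases hc : c = ℓ
  · subst hc
    have : c ∈ ({c | i c ≠ x c} : Finset (Fin d)) := by rw [hℓ]; exact Finset.mem_singleton_self c
    simp only [Finset.mem_filter, Finset.mem_univ, true_and] at this
    rw [cflip_apply_self]
    revert this
    cases i c <;> cases x c <;> simp
  · have : c ∉ ({c' | i c' ≠ x c'} : Finset (Fin d)) := by
      rw [hℓ]; simpa using hc
    simp only [Finset.mem_filter, Finset.mem_univ, true_and, not_not] at this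
    rw [cflip_apply_ne i hc, this]

end Cube

section Cube2
variable {d : ℕ}

/-- The set of differing coordinates. -/
def diffSet (i j : Fin d → Bool) : Finset (Fin d) := {c | i c ≠ j c}

lemma card_diffSet (i j : Fin d → Bool) : (diffSet i j).card = hammingDist i j := rfl

lemma diffSet_cflip_mem {i j : Fin d → Bool} {ℓ : Fin d} (h : ℓ ∈ diffSet i j) :
    diffSet (cflip i ℓ) j = (diffSet i j).erase ℓ := by
  ext c
  simp only [diffSet, Finset.mem_filter, Finset.mem_univ, true_and, Finset.mem_erase]
  by_cases hc : c = ℓ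
  · subst hc
    simp only [diffSet, Finset.mem_filter, Finset.mem_univ, true_and] at h
    rw [cflip_apply_self]
    constructor
    · intro hcontra
      exfalso
      revert h hcontra
      cases i c <;> cases j c <;> simp
    · intro hh; exact absurd rfl hh.1
  · rw [cflip_apply_ne i hc]
    tauto

lemma diffSet_cflip_not_mem {i j : Fin d → Bool} {ℓ : Fin d} (h : ℓ ∉ diffSet i j) :
    diffSet (cflip i ℓ) j = insert ℓ (diffSet i j) := by
  ext c
  simp only [diffSet, Finset.mem_filter, Finset.mem_univ, true_and, Finset.mem_insert]
  by_cases hc : c = ℓ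
  · subst hc
    simp only [diffSet, Finset.mem_filter, Finset.mem_univ, true_and, not_not] at h
    rw [cflip_apply_self]
    constructor
    · intro _; left; rfl
    · intro _
      rw [← h]
      cases i c <;> simp
  · rw [cflip_apply_ne i hc]
    tauto

lemma hammingDist_cflip_of_mem {i j : Fin d → Bool} {ℓ : Fin d} (h : ℓ ∈ diffSet i j) :
    hammingDist (cflip i ℓ) j = hammingDist i j - 1 := by
  rw [← card_diffSet, ← card_diffSet, diffSet_cflip_mem h, Finset.card_erase_of_mem h]

lemma hammingDist_cflip_of_not_mem {i j : Fin d → Bool} {ℓ : Fin d} (h : ℓ ∉ diffSet i j) :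
    hammingDist (cflip i ℓ) j = hammingDist i j + 1 := by
  rw [← card_diffSet, ← card_diffSet, diffSet_cflip_not_mem h, Finset.card_insert_of_notMem h]

end Cube2

section Cube3
variable {d : ℕ}

/-- Splitting a sum against one step of the walk. -/
lemma cubeP_step (hd : 1 ≤ d) (i : Fin d → Bool) (g : (Fin d → Bool) → ℝ) :
    ∑ x : Fin d → Bool, cubeP d i x * g x
      = 1/2 * g i + 1/(2*d) * ∑ ℓ : Fin d, g (cflip i ℓ) := by
  classical
  set T : Finset (Fin d → Bool) := insert i (Finset.univ.image (cflip i)) with hT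
  have hvanish : ∀ x ∈ (Finset.univ : Finset (Fin d → Bool)), x ∉ T → cubeP d i x * g x = 0 := by
    intro x _ hx
    simp only [hT, Finset.mem_insert, Finset.mem_image, Finset.mem_univ, true_and,
      not_or, not_exists] at hx
    have hne : i ≠ x := fun h => hx.1 h.symm
    have hdist : hammingDist i x ≠ 1 := by
      intro h1
      obtain ⟨ℓ, rfl⟩ := exists_cflip_of_dist_one h1
      exact hx.2 ℓ rfl
    unfold cubeP
    rw [if_neg hne, if_neg hdist, zero_mul]
  rw [← Finset.sum_subset (Finset.subset_univ T) hvanish]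
  have hnotmem : i ∉ Finset.univ.image (cflip i) := by
    simp only [Finset.mem_image, Finset.mem_univ, true_and, not_exists]
    exact fun ℓ h => cflip_ne i ℓ h
  rw [hT, Finset.sum_insert hnotmem]
  rw [Finset.sum_image (fun a _ b _ h => cflip_inj i h)]
  have h1 : cubeP d i i = 1/2 := by unfold cubeP; rw [if_pos rfl]
  have h2 : ∀ ℓ : Fin d, cubeP d i (cflip i ℓ) = 1/(2*d) := by
    intro ℓ
    unfold cubeP
    rw [if_neg (Ne.symm (cflip_ne i ℓ)), if_pos (hammingDist_cflip_one i ℓ)]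
  rw [Finset.sum_congr rfl (fun ℓ _ => by rw [h2 ℓ])]
  rw [h1, ← Finset.mul_sum]

/-- Counting neighbors by distance. -/
lemma cflip_sum (i j : Fin d → Bool) (F : ℕ → ℝ) :
    ∑ ℓ : Fin d, F (hammingDist (cflip i ℓ) j)
      = (hammingDist i j : ℝ) * F (hammingDist i j - 1)
        + ((d - hammingDist i j : ℕ) : ℝ) * F (hammingDist i j + 1) := by
  classical
  rw [← Finset.sum_filter_add_sum_filter_not Finset.univ (fun ℓ => ℓ ∈ diffSet i j)]
  have e1 : ∀ ℓ ∈ Finset.univ.filter (fun ℓ => ℓ ∈ diffSet i j),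
      F (hammingDist (cflip i ℓ) j) = F (hammingDist i j - 1) := by
    intro ℓ hℓ
    rw [hammingDist_cflip_of_mem (Finset.mem_filter.mp hℓ).2]
  have e2 : ∀ ℓ ∈ Finset.univ.filter (fun ℓ => ℓ ∉ diffSet i j),
      F (hammingDist (cflip i ℓ) j) = F (hammingDist i j + 1) := by
    intro ℓ hℓ
    rw [hammingDist_cflip_of_not_mem (Finset.mem_filter.mp hℓ).2]
  rw [Finset.sum_congr rfl e1, Finset.sum_congr rfl e2]
  rw [Finset.sum_const, Finset.sum_const]
  have c1 : (Finset.univ.filter (fun ℓ => ℓ ∈ diffSet i j)).card = hammingDist i j := by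
    rw [← card_diffSet]
    congr 1
    ext c
    simp [diffSet]
  have c2 : (Finset.univ.filter (fun ℓ => ℓ ∉ diffSet i j)).card = d - hammingDist i j := by
    have := Finset.card_filter_add_card_filter_not
      (s := (Finset.univ : Finset (Fin d))) (p := fun ℓ => ℓ ∈ diffSet i j)
    rw [Finset.card_univ, Fintype.card_fin] at this
    omega
  rw [c1, c2]
  simp [nsmul_eq_mul]

end Cube3

noncomputable def Ffun (d k t : ℕ) : ℝ := Gfun d k t / (d:ℝ)^t

lemma Ffun_rec {d : ℕ} (hd : 1 ≤ d) {k : ℕ} (hk : k ≤ d) (t : ℕ) :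
    Ffun d k (t+1)
      = 1/2 * Ffun d k t
        + 1/(2*d) * ((k:ℝ) * Ffun d (k-1) t + ((d-k:ℕ):ℝ) * Ffun d (k+1) t) := by
  have hd0 : (d:ℝ) ≠ 0 := by positivity
  have hdp : (d:ℝ)^t ≠ 0 := by positivity
  have h := Gfun_rec d k hk t
  have h2 : (2:ℝ) ≠ 0 := two_ne_zero
  calc Ffun d k (t+1) = Gfun d k (t+1) / ((d:ℝ)^t * d) := by
        unfold Ffun; rw [pow_succ]
    _ = (2 * Gfun d k (t+1)) / (2 * ((d:ℝ)^t * d)) := by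
        rw [mul_div_mul_left _ _ h2]
    _ = ((d:ℝ) * Gfun d k t + (k:ℝ) * Gfun d (k-1) t
          + ((d-k:ℕ):ℝ) * Gfun d (k+1) t) / (2 * ((d:ℝ)^t * d)) := by rw [h]
    _ = _ := by
        unfold Ffun
        field_simp
        ring

lemma cubeP_pow_eq {d : ℕ} (hd : 1 ≤ d) :
    ∀ (t : ℕ) (i j : Fin d → Bool),
      (cubeP d ^ t) i j = Ffun d (hammingDist i j) t := by
  intro t
  induction t with
  | zero =>
    intro i j
    rw [pow_zero]
    have hF : Ffun d (hammingDist i j) 0 = if hammingDist i j = 0 then 1 else 0 := by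
      unfold Ffun Gfun
      rw [pow_zero, div_one]
      rw [Finset.sum_eq_single_of_mem 0 (Finset.mem_range.mpr (by omega))]
      · show (Stir 0 0 : ℝ) * Acoef d (hammingDist i j) 0 = _
        have : Stir 0 0 = 1 := rfl
        rw [this]
        unfold Acoef
        by_cases h : hammingDist i j = 0
        · rw [h]; simp
        · rw [if_neg (by omega), if_neg h]; simp
      · intro b _ hb
        obtain ⟨m, rfl⟩ : ∃ m, b = m + 1 := ⟨b - 1, by omega⟩
        rw [Stir_zero_succ]
        push_cast
        ring
    rw [hF, Matrix.one_apply]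
    by_cases h : i = j
    · rw [if_pos h, if_pos (by rw [h, hammingDist_self])]
    · rw [if_neg h, if_neg (by rwa [hammingDist_eq_zero])]
  | succ t ih =>
    intro i j
    rw [pow_succ', Matrix.mul_apply]
    have hstep := cubeP_step hd i (fun x => Ffun d (hammingDist x j) t)
    rw [Finset.sum_congr rfl (fun x _ => by rw [ih x j])]
    rw [hstep]
    rw [cflip_sum i j (fun m => Ffun d m t)]
    have hk : hammingDist i j ≤ d := by
      have := hammingDist_le_card_fintype (x := i) (y := j)
      rwa [Fintype.card_fin] at this
    rw [Ffun_rec hd hk t]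

noncomputable def ccoef (d k n : ℕ) : ℝ :=
  (n:ℝ) * Acoef d k n + Acoef d k (n+1) - (d:ℝ) * Acoef d k n

noncomputable def Dfun (d k t : ℕ) : ℝ :=
  ∑ n ∈ Finset.range (d+1), (Stir t n : ℝ) * ccoef d k n

lemma Gfun_sub (d k : ℕ) (hk : k ≤ d) (t : ℕ) :
    Gfun d k (t+1) - (d:ℝ) * Gfun d k t = Dfun d k t := by
  rw [Gfun_succ d k hk t]
  unfold Gfun Dfun ccoef
  rw [Finset.mul_sum, ← Finset.sum_sub_distrib]
  apply Finset.sum_congr rfl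
  intro n _
  ring

lemma Ffun_step (d k : ℕ) (hd : 1 ≤ d) (hk : k ≤ d) (t : ℕ) :
    Ffun d k (t+1) - Ffun d k t = Dfun d k t / (d:ℝ)^(t+1) := by
  have hd0 : (d:ℝ) ≠ 0 := by positivity
  have hdp : (d:ℝ)^t ≠ 0 := by positivity
  rw [← Gfun_sub d k hk t]
  unfold Ffun
  rw [pow_succ]
  field_simp

/-- Sign of `ccoef` below the crossing point. -/
lemma ccoef_nonneg (d k n : ℕ) (hk : k ≤ d) (hn : n ≤ d) (h2k : n < 2*k) :
    0 ≤ ccoef d k n := by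
  unfold ccoef
  rcases lt_or_ge n k with hnk | hnk
  · have hA : Acoef d k n = 0 := by unfold Acoef; rw [if_neg (by omega)]
    rw [hA]
    have := Acoef_nonneg d k (n+1)
    linarith
  · obtain ⟨j, rfl⟩ : ∃ j, n = k + j := ⟨n - k, by omega⟩
    obtain ⟨r, rfl⟩ : ∃ r, d = k + r := ⟨d - k, by omega⟩
    have hjr : j ≤ r := by omega
    have e1 : Acoef (k+r) k (k+j)
        = ((k+j).factorial : ℝ) * (r.choose j : ℝ) * (1/2)^(k+j) := by
      unfold Acoef
      rw [if_pos (by omega), show k+r-k = r from by omega, show k+j-k = j from by omega]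
    have e2 : Acoef (k+r) k (k+j+1)
        = ((k+j+1).factorial : ℝ) * (r.choose (j+1) : ℝ) * (1/2)^(k+j+1) := by
      unfold Acoef
      rw [if_pos (by omega), show k+r-k = r from by omega,
        show k+j+1-k = j+1 from by omega]
    rw [e1, e2]
    -- need: (k+j+1)! C(r,j+1) x/2 + (k+j) (k+j)! C(r,j) x - (k+r)(k+j)! C(r,j) x ≥ 0
    -- i.e. (k+j+1) C(r,j+1) ≥ 2 (r-j) C(r,j) = 2 (j+1) C(r,j+1), ⇐ k+j+1 ≥ 2(j+1) ⇔ k+j < 2k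
    have hcs := Nat.choose_succ_right_eq r j   -- C(r,j+1)*(j+1) = C(r,j)*(r-j)
    have hnat : 2 * (r - j) * r.choose j ≤ (k+j+1) * r.choose (j+1) := by
      have h1 : 2 * (r - j) * r.choose j = 2 * (j+1) * r.choose (j+1) := by
        nlinarith [hcs]
      rw [h1]
      have : 2 * (j+1) ≤ k+j+1 := by omega
      exact Nat.mul_le_mul_right _ this
    have hcast : (2 * (r - j) * r.choose j : ℝ) ≤ ((k+j+1) * r.choose (j+1) : ℝ) := by
      exact_mod_cast hnat
    have hrw : ((r - j : ℕ) : ℝ) = (r:ℝ) - (j:ℝ) := by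
      push_cast [Nat.cast_sub hjr]; ring
    rw [Nat.factorial_succ]
    push_cast [hrw] at hcast ⊢
    have hxpos : (0:ℝ) < (1/2)^(k+j) := by positivity
    have hfpos : (0:ℝ) < ((k+j).factorial : ℝ) := by positivity
    rw [pow_succ]
    have hprod := mul_le_mul_of_nonneg_left hcast
      (le_of_lt (mul_pos hfpos hxpos))
    nlinarith [hprod]

/-- Sign of `ccoef` above the crossing point. -/
lemma ccoef_nonpos (d k n : ℕ) (hk : k ≤ d) (hn : n ≤ d) (h2k : 2*k ≤ n) :
    ccoef d k n ≤ 0 := by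
  unfold ccoef
  have hnk : k ≤ n := by omega
  obtain ⟨j, rfl⟩ : ∃ j, n = k + j := ⟨n - k, by omega⟩
  obtain ⟨r, rfl⟩ : ∃ r, d = k + r := ⟨d - k, by omega⟩
  have hjr : j ≤ r := by omega
  have e1 : Acoef (k+r) k (k+j)
      = ((k+j).factorial : ℝ) * (r.choose j : ℝ) * (1/2)^(k+j) := by
    unfold Acoef
    rw [if_pos (by omega), show k+r-k = r from by omega, show k+j-k = j from by omega]
  have e2 : Acoef (k+r) k (k+j+1)
      = ((k+j+1).factorial : ℝ) * (r.choose (j+1) : ℝ) * (1/2)^(k+j+1) := by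
    unfold Acoef
    rw [if_pos (by omega), show k+r-k = r from by omega,
      show k+j+1-k = j+1 from by omega]
  rw [e1, e2]
  have hcs := Nat.choose_succ_right_eq r j
  have hnat : (k+j+1) * r.choose (j+1) ≤ 2 * (r - j) * r.choose j := by
    have h1 : 2 * (r - j) * r.choose j = 2 * (j+1) * r.choose (j+1) := by
      nlinarith [hcs]
    rw [h1]
    have : k+j+1 ≤ 2 * (j+1) := by omega
    exact Nat.mul_le_mul_right _ this
  have hcast : ((k+j+1) * r.choose (j+1) : ℝ) ≤ (2 * (r - j) * r.choose j : ℝ) := by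
    exact_mod_cast hnat
  have hrw : ((r - j : ℕ) : ℝ) = (r:ℝ) - (j:ℝ) := by
    push_cast [Nat.cast_sub hjr]; ring
  rw [Nat.factorial_succ]
  push_cast [hrw] at hcast ⊢
  have hxpos : (0:ℝ) < (1/2)^(k+j) := by positivity
  have hfpos : (0:ℝ) < ((k+j).factorial : ℝ) := by positivity
  rw [pow_succ]
  have hprod := mul_le_mul_of_nonneg_left hcast
    (le_of_lt (mul_pos hfpos hxpos))
  nlinarith [hprod]

lemma Dfun_nonneg_early (d k t : ℕ) (hk : k ≤ d) (ht : t < 2*k) : 0 ≤ Dfun d k t := by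
  unfold Dfun
  apply Finset.sum_nonneg
  intro n hn
  rcases le_or_gt n t with hnt | hnt
  · exact mul_nonneg (by positivity)
      (ccoef_nonneg d k n hk (by have := Finset.mem_range.mp hn; omega) (by omega))
  · rw [Stir_eq_zero_of_lt hnt]
    simp

lemma Dfun_nonpos_k0 (d t : ℕ) : Dfun d 0 t ≤ 0 := by
  unfold Dfun
  apply Finset.sum_nonpos
  intro n hn
  apply mul_nonpos_of_nonneg_of_nonpos (by positivity)
  exact ccoef_nonpos d 0 n (by omega) (by have := Finset.mem_range.mp hn; omega) (by omega)

lemma Dfun_cross (d k t : ℕ) (hk : k ≤ d) (hk1 : 1 ≤ k) (ht : 2*k ≤ t)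
    (h : Dfun d k t ≤ 0) : Dfun d k (t+1) ≤ 0 := by
  have hpos : 0 < Stir t (2*k) := Stir_pos (by omega) ht
  have key : (Stir t (2*k) : ℝ) * Dfun d k (t+1)
      ≤ (Stir (t+1) (2*k) : ℝ) * Dfun d k t := by
    unfold Dfun
    rw [Finset.mul_sum, Finset.mul_sum]
    apply Finset.sum_le_sum
    intro n hn
    have hnd : n ≤ d := by have := Finset.mem_range.mp hn; omega
    rcases lt_or_ge n (2*k) with hcase | hcase
    · -- n < 2k : ccoef ≥ 0 and TP2
      have hc : 0 ≤ ccoef d k n := ccoef_nonneg d k n hk hnd hcase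
      have htp2 := Stir_TP2 t n (2*k - n)
      rw [show n + (2*k - n) = 2*k from by omega] at htp2
      have htp2' : (Stir t (2*k) : ℝ) * (Stir (t+1) n : ℝ)
          ≤ (Stir t n : ℝ) * (Stir (t+1) (2*k) : ℝ) := by exact_mod_cast htp2
      calc (Stir t (2*k) : ℝ) * ((Stir (t+1) n : ℝ) * ccoef d k n)
          = ((Stir t (2*k) : ℝ) * (Stir (t+1) n : ℝ)) * ccoef d k n := by ring
        _ ≤ ((Stir t n : ℝ) * (Stir (t+1) (2*k) : ℝ)) * ccoef d k n :=
            mul_le_mul_of_nonneg_right htp2' hc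
        _ = (Stir (t+1) (2*k) : ℝ) * ((Stir t n : ℝ) * ccoef d k n) := by ring
    · -- 2k ≤ n : ccoef ≤ 0 and TP2 in the other direction
      have hc : ccoef d k n ≤ 0 := ccoef_nonpos d k n hk hnd hcase
      have htp2 := Stir_TP2 t (2*k) (n - 2*k)
      rw [show 2*k + (n - 2*k) = n from by omega] at htp2
      have htp2' : (Stir t n : ℝ) * (Stir (t+1) (2*k) : ℝ)
          ≤ (Stir t (2*k) : ℝ) * (Stir (t+1) n : ℝ) := by exact_mod_cast htp2
      calc (Stir t (2*k) : ℝ) * ((Stir (t+1) n : ℝ) * ccoef d k n)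
          = ((Stir t (2*k) : ℝ) * (Stir (t+1) n : ℝ)) * ccoef d k n := by ring
        _ ≤ ((Stir t n : ℝ) * (Stir (t+1) (2*k) : ℝ)) * ccoef d k n :=
            mul_le_mul_of_nonpos_right htp2' hc
        _ = (Stir (t+1) (2*k) : ℝ) * ((Stir t n : ℝ) * ccoef d k n) := by ring
  have h2 : (Stir (t+1) (2*k) : ℝ) * Dfun d k t ≤ 0 :=
    mul_nonpos_of_nonneg_of_nonpos (by positivity) h
  have h3 : (Stir t (2*k) : ℝ) * Dfun d k (t+1) ≤ 0 := le_trans key h2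
  have hp : (0:ℝ) < (Stir t (2*k) : ℝ) := by exact_mod_cast hpos
  nlinarith [h3, hp]

lemma myMonoOn (f : ℕ → ℝ) (s : ℕ) (h : ∀ t, t < s → f t ≤ f (t+1)) :
    MonotoneOn f {x | x ≤ s} := by
  have key : ∀ b, b ≤ s → ∀ a, a ≤ b → f a ≤ f b := by
    intro b
    induction b with
    | zero => intro _ a ha; rw [Nat.le_zero.mp ha]
    | succ b ih =>
      intro hb a ha
      rcases Nat.eq_or_lt_of_le ha with rfl | hlt
      · rfl
      · exact le_trans (ih (by omega) a (by omega)) (h b (by omega))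
  intro a ha b hb hab
  exact key b hb a hab

lemma myAntiOn (f : ℕ → ℝ) (s : ℕ) (h : ∀ t, s ≤ t → f (t+1) ≤ f t) :
    AntitoneOn f {x | s ≤ x} := by
  have key : ∀ (n : ℕ) (a : ℕ), s ≤ a → f (a + n) ≤ f a := by
    intro n
    induction n with
    | zero => intro a _; rfl
    | succ n ih =>
      intro a ha
      calc f (a + (n+1)) = f ((a + n) + 1) := by ring_nf
        _ ≤ f (a + n) := h (a+n) (by omega)
        _ ≤ f a := ih a ha
  intro a ha b hb hab
  have : b = a + (b - a) := by omega
  rw [this]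
  exact key (b - a) a ha


/-- For the lazy random walk on the `d`-dimensional hypercube, the transition
probability `P_{i,j}(t)` between any two fixed vertices is unimodal in `t`. -/
theorem cube_transition_unimodal (d : ℕ) (hd : 1 ≤ d) (i j : Fin d → Bool) :
    Unimodal (fun t : ℕ => (cubeP d ^ t) i j) := by
  have hfeq : (fun t : ℕ => (cubeP d ^ t) i j)
      = fun t => Ffun d (hammingDist i j) t := by
    funext t
    exact cubeP_pow_eq hd t i j
  rw [hfeq]
  set k := hammingDist i j with hkdef
  have hk : k ≤ d := by
    have := hammingDist_le_card_fintype (x := i) (y := j)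
    rwa [Fintype.card_fin] at this
  set f : ℕ → ℝ := fun t => Ffun d k t with hfdef
  have hdpow : ∀ t : ℕ, (0:ℝ) < (d:ℝ)^(t+1) := by
    intro t
    have : (0:ℝ) < (d:ℝ) := by exact_mod_cast hd
    positivity
  have hstep : ∀ t, f (t+1) - f t = Dfun d k t / (d:ℝ)^(t+1) :=
    fun t => Ffun_step d k hd hk t
  have hup : ∀ t, 0 ≤ Dfun d k t → f t ≤ f (t+1) := by
    intro t h
    have := hstep t
    have hq : 0 ≤ Dfun d k t / (d:ℝ)^(t+1) := div_nonneg h (le_of_lt (hdpow t))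
    linarith
  have hdown : ∀ t, Dfun d k t ≤ 0 → f (t+1) ≤ f t := by
    intro t h
    have := hstep t
    have hq : Dfun d k t / (d:ℝ)^(t+1) ≤ 0 :=
      div_nonpos_of_nonpos_of_nonneg h (le_of_lt (hdpow t))
    linarith
  by_cases hex : ∃ t, Dfun d k t < 0
  · set s := Nat.find hex with hsdef
    have hs : Dfun d k s < 0 := Nat.find_spec hex
    have hmin : ∀ t, t < s → 0 ≤ Dfun d k t := by
      intro t ht
      have := Nat.find_min hex ht
      linarith [not_lt.mp this]
    refine ⟨s, Or.inl (myMonoOn f s (fun t ht => hup t (hmin t ht))), Or.inr ?_⟩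
    -- all t ≥ s have Dfun ≤ 0
    have hall : ∀ t, s ≤ t → Dfun d k t ≤ 0 := by
      intro t ht
      induction t with
      | zero =>
        have : s = 0 := by omega
        rw [← this]; exact le_of_lt hs
      | succ t ih =>
        rcases Nat.eq_or_lt_of_le ht with he | hlt
        · rw [← he]; exact le_of_lt hs
        · have hts : s ≤ t := by omega
          have hDt : Dfun d k t ≤ 0 := ih hts
          rcases Nat.eq_zero_or_pos k with hk0 | hk1
          · rw [hk0]; exact Dfun_nonpos_k0 d (t+1)
          · -- k ≥ 1 : need 2k ≤ t
            have h2ks : 2*k ≤ s := by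
              by_contra hc
              push_neg at hc
              exact absurd (Dfun_nonneg_early d k s hk hc) (by linarith)
            exact Dfun_cross d k t hk hk1 (by omega) hDt
    exact myAntiOn f s (fun t ht => hdown t (hall t ht))
  · push_neg at hex
    refine ⟨0, Or.inl ?_, Or.inl ?_⟩
    · exact myMonoOn f 0 (fun t ht => by omega)
    · exact (monotone_nat_of_le_succ (fun t => hup t (hex t))).monotoneOn _
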